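/- If M is a finite-dimensional subspace of a complex Hilbert space V and P_M : V → M is the orthogonal projection, then the functorial extension of P_M to the symmetric algebras (the algebra map S(P_M) : SV → SM) coincides with the orthogonal projection of SV onto SM with respect to the permanent inner product. -/

import Mathlib

open scoped BigOperators

/-- The permanent inner product on degree-`d` symmetric tensors:
`⟨x₁⋯x_d | y₁⋯y_d⟩ = Per[⟨x_a|y_b⟩]`. -/
noncomputable def permInner {V : Type*} [NormedAddCommGroup V] [InnerProductSpace ℂ V]
    {d : ℕ} (x y : Fin d → V) : ℂ :=
  ∑ π : Equiv.Perm (Fin d), ∏ k, (inner ℂ (x k) (y (π k)) : ℂ)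

/-- For a finite-dimensional subspace `M ⊆ V` with orthogonal projection `P_M`, the functorial
extension `S(P_M) : SV → SM`, `v₁⋯v_d ↦ (P_M v₁)⋯(P_M v_d)`, is the orthogonal projection of
`SV` onto `SM` for the permanent inner product: since `S(P_M)` lands in `SM`, this says exactly
that for every element `w₁⋯w_d` of `S^d M` and every `v₁⋯v_d ∈ S^d V`,
`⟨w₁⋯w_d | (P_M v₁)⋯(P_M v_d)⟩ = ⟨w₁⋯w_d | v₁⋯v_d⟩`,
i.e. `(P_M v₁)⋯(P_M v_d) − v₁⋯v_d` is perpendicular to `S^d M`. -/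
theorem stmt4 {V : Type*} [NormedAddCommGroup V] [InnerProductSpace ℂ V]
    (M : Submodule ℂ V) [FiniteDimensional ℂ M] {d : ℕ}
    (v : Fin d → V) (w : Fin d → M) :
    permInner (fun i => (w i : V)) (fun i => (Submodule.orthogonalProjection M (v i) : V))
      = permInner (fun i => (w i : V)) v := by
  unfold permInner
  refine Finset.sum_congr rfl fun π _ => Finset.prod_congr rfl fun k _ => ?_
  exact Submodule.inner_orthogonalProjection_eq_of_mem_left (K := M) (w k) (v (π k))
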